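/- The homogeneous quartic polynomial P = −x_0^2·x_1^2 + x_0^3·x_2 − x_1^3·x_2 + x_0·x_1·x_2^2 − 5·x_2^4 is irreducible in the polynomial ring ℂ[x_0, x_1, x_2]. -/

import Mathlib

open MvPolynomial

noncomputable section
namespace X045

abbrev R : Type := MvPolynomial (Fin 2) ℂ
abbrev S : Type := MvPolynomial (Fin 1) ℂ

def z : R := X 0
def y : R := X 1

def ε : R →+* S :=
  (Polynomial.evalRingHom (0 : S)).comp (MvPolynomial.finSuccEquiv ℂ 1).toAlgHom.toRingHom

@[simp] lemma eps_z : ε z = 0 := by simp [ε, z, finSuccEquiv_X_zero]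

@[simp] lemma eps_y : ε y = X 0 := by
  have : (X 1 : R) = X (Fin.succ 0) := by norm_num
  simp [ε, y, this, finSuccEquiv_X_succ]

lemma z_ne_zero : z ≠ 0 := X_ne_zero _

lemma z_dvd_of_eps (t : R) (h : ε t = 0) : ∃ t', t = z * t' := by
  have h' : ((finSuccEquiv ℂ 1) t).coeff 0 = 0 := by
    rwa [Polynomial.coeff_zero_eq_eval_zero]
  obtain ⟨q, hq⟩ := Polynomial.X_dvd_iff.mpr h'
  refine ⟨(finSuccEquiv ℂ 1).symm q, ?_⟩
  apply (finSuccEquiv ℂ 1).injective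
  rw [map_mul, AlgEquiv.apply_symm_apply]
  rw [show ((finSuccEquiv ℂ 1) z) = Polynomial.X from finSuccEquiv_X_zero, ← hq]

/-- The cubic `z t³ − y² t² + y z² t − y³ z − 5 z⁴` has no root in `R`. -/
lemma no_root (t : R) (h : z*t^3 - y^2*t^2 + y*z^2*t - y^3*z - 5*z^4 = 0) : False := by
  have h0 := congrArg ε h
  simp only [map_sub, map_add, map_mul, map_pow, eps_z, eps_y, map_zero, map_ofNat] at h0
  ring_nf at h0
  have h1 : (ε t * X 0) ^ 2 = 0 := by linear_combination -h0
  have h2 : ε t * X 0 = 0 := by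
    simpa using pow_eq_zero_iff (n := 2) (by norm_num) |>.mp h1
  have ht : ε t = 0 := (mul_eq_zero.mp h2).resolve_right (X_ne_zero _)
  obtain ⟨t₁, rfl⟩ := z_dvd_of_eps t ht
  have h3 : z * (z^3*t₁^3 - y^2*z*t₁^2 + y*z^2*t₁ - y^3 - 5*z^3) = 0 := by
    linear_combination h
  have h4 := (mul_eq_zero.mp h3).resolve_left z_ne_zero
  have h5 := congrArg ε h4
  simp only [map_sub, map_add, map_mul, map_pow, eps_z, eps_y, map_zero, map_ofNat] at h5
  ring_nf at h5
  exact pow_ne_zero 3 (X_ne_zero (0 : Fin 1)) (neg_eq_zero.mp h5)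

/-- The key system of equations for the case that the leading coefficient of the linear
factor is (an associate of) `z` has no solution. -/
lemma case2 (b d e : R) (h1 : z*d + b = -y^2) (h2 : z*e + b*d = y*z^2)
    (h3 : b*e = -(y^3*z + 5*z^4)) : False := by
  have hb0 : ε b = -(X 0)^2 := by
    have := congrArg ε h1
    simp only [map_add, map_mul, map_neg, map_pow, eps_z, eps_y, zero_mul, zero_add] at this
    exact this
  have hbne : ε b ≠ 0 := by
    rw [hb0]; intro hc
    exact pow_ne_zero 2 (X_ne_zero (0 : Fin 1)) (neg_eq_zero.mp hc)
  have he0 : ε e = 0 := by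
    have := congrArg ε h3
    simp only [map_mul, map_neg, map_add, map_pow, eps_z, eps_y, map_ofNat, mul_zero,
      zero_mul, add_zero, neg_zero] at this
    have hmul : ε b * ε e = 0 := by linear_combination this
    rcases mul_eq_zero.mp hmul with h | h
    · exact absurd h hbne
    · exact h
  obtain ⟨e₁, rfl⟩ := z_dvd_of_eps e he0
  have h3' : b * e₁ = -(y^3 + 5*z^3) := by
    apply mul_left_cancel₀ z_ne_zero
    linear_combination h3
  have hd0 : ε d = 0 := by
    have := congrArg ε h2
    simp only [map_add, map_mul, map_pow, eps_z, eps_y, mul_zero, zero_mul, zero_add] at this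
    have hmul : ε b * ε d = 0 := by linear_combination this
    rcases mul_eq_zero.mp hmul with h | h
    · exact absurd h hbne
    · exact h
  obtain ⟨d₁, rfl⟩ := z_dvd_of_eps d hd0
  have h2' : z*e₁ + b*d₁ = y*z := by
    apply mul_left_cancel₀ z_ne_zero
    linear_combination h2
  have hd10 : ε d₁ = 0 := by
    have := congrArg ε h2'
    simp only [map_add, map_mul, eps_z, eps_y, mul_zero, zero_mul, zero_add] at this
    have hmul : ε b * ε d₁ = 0 := by linear_combination this
    rcases mul_eq_zero.mp hmul with h | h
    · exact absurd h hbne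
    · exact h
  obtain ⟨d₂, rfl⟩ := z_dvd_of_eps d₁ hd10
  have h2'' : e₁ + b*d₂ = y := by
    apply mul_left_cancel₀ z_ne_zero
    linear_combination h2'
  have hb : b = -y^2 - z^3*d₂ := by linear_combination h1
  subst hb
  have hstar : y^4*d₂ + y*z^3*d₂ + 2*y^2*z^3*d₂^2 + z^6*d₂^3 = 5*z^3 := by
    linear_combination -h3' - (y^2 + z^3*d₂) * h2''
  clear h1 h2 h3 h3' h2' h2'' hb0 hbne he0 hd0 hd10
  have desc : ∀ w : R, (X 0 : S)^4 * ε w = 0 → ∃ w', w = z * w' := by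
    intro w hw
    apply z_dvd_of_eps
    rcases mul_eq_zero.mp hw with h | h
    · exact absurd h (pow_ne_zero 4 (X_ne_zero _))
    · exact h
  have ha1 := congrArg ε hstar
  simp only [map_add, map_mul, map_pow, eps_z, eps_y, map_ofNat] at ha1
  obtain ⟨d₃, rfl⟩ := desc d₂ (by linear_combination ha1)
  have hstar2 : y^4*d₃ + y*z^3*d₃ + 2*y^2*z^4*d₃^2 + z^8*d₃^3 = 5*z^2 :=
    mul_left_cancel₀ z_ne_zero (by linear_combination hstar)
  have ha2 := congrArg ε hstar2
  simp only [map_add, map_mul, map_pow, eps_z, eps_y, map_ofNat] at ha2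
  obtain ⟨d₄, rfl⟩ := desc d₃ (by linear_combination ha2)
  have hstar3 : y^4*d₄ + y*z^3*d₄ + 2*y^2*z^5*d₄^2 + z^10*d₄^3 = 5*z :=
    mul_left_cancel₀ z_ne_zero (by linear_combination hstar2)
  have ha3 := congrArg ε hstar3
  simp only [map_add, map_mul, map_pow, eps_z, eps_y, map_ofNat] at ha3
  obtain ⟨d₅, rfl⟩ := desc d₄ (by linear_combination ha3)
  have hstar4 : y^4*d₅ + y*z^3*d₅ + 2*y^2*z^6*d₅^2 + z^12*d₅^3 = 5 :=
    mul_left_cancel₀ z_ne_zero (by linear_combination hstar3)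
  have ha4 := congrArg ε hstar4
  simp only [map_add, map_mul, map_pow, eps_z, eps_y, map_ofNat] at ha4
  have hfin := congrArg (MvPolynomial.eval (fun _ => (0:ℂ))) ha4
  simp only [map_add, map_mul, map_pow, map_zero, map_ofNat, eval_X, mul_zero, zero_mul,
    add_zero, zero_add, zero_pow] at hfin
  norm_num at hfin

/-- The cubic over `R` corresponding to our quartic. -/
def fpoly : Polynomial R :=
  Polynomial.C z * Polynomial.X^3 + Polynomial.C (-y^2) * Polynomial.X^2
    + Polynomial.C (y*z^2) * Polynomial.X + Polynomial.C (-(y^3*z + 5*z^4))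

lemma natDegree_fpoly : fpoly.natDegree = 3 := Polynomial.natDegree_cubic z_ne_zero

lemma fpoly_ne_zero : fpoly ≠ 0 := by
  intro h
  have := natDegree_fpoly
  rw [h] at this
  simp at this

lemma eq_quad (p : Polynomial R) (hp : p.natDegree ≤ 2) :
    p = Polynomial.C (p.coeff 2) * Polynomial.X^2 + Polynomial.C (p.coeff 1) * Polynomial.X
      + Polynomial.C (p.coeff 0) := by
  ext n
  rcases n with _|_|_|n
  · simp
  · simp [Polynomial.coeff_X_pow]
  · simp [Polynomial.coeff_X_pow]
  · rw [Polynomial.coeff_eq_zero_of_natDegree_lt (by omega)]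
    simp [Polynomial.coeff_X_pow]

/-- No factorization into a linear and a quadratic factor. -/
lemma deg12 (g h : Polynomial R) (hgh : fpoly = g * h) (hg : g.natDegree = 1)
    (hh : h.natDegree = 2) : False := by
  set a := g.coeff 1 with ha'
  set b := g.coeff 0 with hb'
  set c := h.coeff 2 with hc'
  set d := h.coeff 1 with hd'
  set e := h.coeff 0 with he'
  have hgr : g = Polynomial.C a * Polynomial.X + Polynomial.C b :=
    Polynomial.eq_X_add_C_of_natDegree_le_one hg.le
  have hhr := eq_quad h hh.le
  rw [hgr, hhr] at hgh
  have hexp : fpoly = Polynomial.C (a*c) * Polynomial.X^3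
      + Polynomial.C (a*d + b*c) * Polynomial.X^2
      + Polynomial.C (a*e + b*d) * Polynomial.X + Polynomial.C (b*e) := by
    rw [hgh]; simp only [map_add, map_mul]; ring
  have E3 : z = a*c := by
    have := congrArg (fun p => Polynomial.coeff p 3) hexp
    simp only [fpoly, Polynomial.coeff_add, Polynomial.coeff_C_mul, Polynomial.coeff_X_pow,
      Polynomial.coeff_C, Polynomial.coeff_X] at this
    norm_num at this
    linear_combination this
  have E2 : -y^2 = a*d + b*c := by
    have := congrArg (fun p => Polynomial.coeff p 2) hexp
    simp only [fpoly, Polynomial.coeff_add, Polynomial.coeff_C_mul, Polynomial.coeff_X_pow,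
      Polynomial.coeff_C, Polynomial.coeff_X] at this
    norm_num at this
    linear_combination this
  have E1 : y*z^2 = a*e + b*d := by
    have := congrArg (fun p => Polynomial.coeff p 1) hexp
    simp only [fpoly, Polynomial.coeff_add, Polynomial.coeff_C_mul, Polynomial.coeff_X_pow,
      Polynomial.coeff_C, Polynomial.coeff_X] at this
    norm_num at this
    linear_combination this
  have E0 : -(y^3*z + 5*z^4) = b*e := by
    have := congrArg (fun p => Polynomial.coeff p 0) hexp
    simp only [fpoly, Polynomial.coeff_add, Polynomial.coeff_C_mul, Polynomial.coeff_X_pow,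
      Polynomial.coeff_C, Polynomial.coeff_X] at this
    norm_num at this
    linear_combination this
  -- split according to which of `a`, `c` is divisible by `z`
  have hsplit : ε a * ε c = 0 := by
    have := congrArg ε E3
    simp only [map_mul, eps_z] at this
    linear_combination -this
  rcases mul_eq_zero.mp hsplit with hsp | hsp
  · -- z ∣ a : reduce to `case2`
    obtain ⟨a₁, ha⟩ := z_dvd_of_eps a hsp
    have ha1c : a₁ * c = 1 := by
      apply mul_left_cancel₀ z_ne_zero
      linear_combination -E3 - c*ha
    exact case2 (b*c) (a₁*d) (a₁*e)
      (by linear_combination -E2 - d*ha)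
      (by linear_combination -E1 - e*ha + b*d*ha1c)
      (by linear_combination -E0 + b*e*ha1c)
  · -- z ∣ c : `a` is a unit, reduce to `no_root`
    obtain ⟨c₁, hc⟩ := z_dvd_of_eps c hsp
    have hac1 : a * c₁ = 1 := by
      apply mul_left_cancel₀ z_ne_zero
      linear_combination -E3 - a*hc
    have hd : d = -(y^2)*c₁ - b*c*c₁ := by linear_combination -c₁ * E2 - d * hac1
    have he : e = y*z^2*c₁ - b*d*c₁ := by linear_combination -c₁ * E1 - e * hac1
    exact no_root (-(b*c₁)) (by linear_combination E0 + b*he - b^2*c₁*hd + b^3*c₁^2*hc)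

/-- A degree-zero factor is a unit. -/
lemma deg0 (g h : Polynomial R) (hgh : fpoly = g * h) (hg : g.natDegree = 0) : IsUnit g := by
  have hgr := Polynomial.eq_C_of_natDegree_eq_zero hg
  set k := g.coeff 0 with hk'
  have E3 : z = k * h.coeff 3 := by
    have := congrArg (fun p => Polynomial.coeff p 3) hgh
    rw [hgr] at hgh
    have := congrArg (fun p => Polynomial.coeff p 3) hgh
    simp only [fpoly, Polynomial.coeff_add, Polynomial.coeff_C_mul, Polynomial.coeff_X_pow,
      Polynomial.coeff_C, Polynomial.coeff_X] at this
    norm_num at this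
    linear_combination this
  have E2 : -y^2 = k * h.coeff 2 := by
    rw [hgr] at hgh
    have := congrArg (fun p => Polynomial.coeff p 2) hgh
    simp only [fpoly, Polynomial.coeff_add, Polynomial.coeff_C_mul, Polynomial.coeff_X_pow,
      Polynomial.coeff_C, Polynomial.coeff_X] at this
    norm_num at this
    linear_combination this
  rw [hgr, Polynomial.isUnit_C]
  -- use the equivalence with S[X]
  have hdvd : (Polynomial.X : Polynomial S) ∣
      (finSuccEquiv ℂ 1) k * (finSuccEquiv ℂ 1) (h.coeff 3) := by
    rw [← map_mul, ← E3]
    exact ⟨1, by rw [show z = X 0 from rfl, finSuccEquiv_X_zero, mul_one]⟩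
  rcases (Polynomial.prime_X (R := S)).2.2 _ _ hdvd with hX | hX
  · -- X ∣ image of k : contradiction with E2
    exfalso
    obtain ⟨q, hq⟩ := hX
    have hk0 : ε k = 0 := by
      simp [ε, hq]
    have := congrArg ε E2
    simp only [map_mul, map_neg, map_pow, eps_y, hk0, zero_mul] at this
    exact pow_ne_zero 2 (X_ne_zero (0 : Fin 1)) (neg_eq_zero.mp this)
  · -- X ∣ image of h.coeff 3 : k is a unit
    obtain ⟨q, hq⟩ := hX
    have hz : (Polynomial.X : Polynomial S) = (finSuccEquiv ℂ 1) z := by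
      rw [show z = X 0 from rfl, finSuccEquiv_X_zero]
    have hXX : (Polynomial.X : Polynomial S) * 1
        = Polynomial.X * (q * (finSuccEquiv ℂ 1) k) := by
      rw [mul_one]
      conv_lhs => rw [hz, E3, map_mul, hq]
      ring
    have h1 : (1 : Polynomial S) = q * (finSuccEquiv ℂ 1) k :=
      mul_left_cancel₀ Polynomial.X_ne_zero hXX
    have hu : IsUnit ((finSuccEquiv ℂ 1) k) := IsUnit.of_mul_eq_one _ (by rw [mul_comm, ← h1])
    have := hu.map (finSuccEquiv ℂ 1).symm
    rwa [AlgEquiv.symm_apply_apply] at this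

lemma irreducible_fpoly : Irreducible fpoly := by
  constructor
  · intro hu
    have h0 := Polynomial.natDegree_eq_zero_of_isUnit hu
    rw [natDegree_fpoly] at h0
    exact three_ne_zero h0
  · intro g h hgh
    have hg0 : g ≠ 0 := by
      rintro rfl
      rw [zero_mul] at hgh
      exact fpoly_ne_zero hgh
    have hh0 : h ≠ 0 := by
      rintro rfl
      rw [mul_zero] at hgh
      exact fpoly_ne_zero hgh
    have hsum : g.natDegree + h.natDegree = 3 := by
      rw [← Polynomial.natDegree_mul hg0 hh0, ← hgh, natDegree_fpoly]
    have h4 : g.natDegree = 0 ∨ g.natDegree = 1 ∨ g.natDegree = 2 ∨ g.natDegree = 3 := by omega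
    rcases h4 with h4 | h4 | h4 | h4
    · exact Or.inl (deg0 g h hgh h4)
    · exact (deg12 g h hgh h4 (by omega)).elim
    · exact (deg12 h g (by rw [hgh, mul_comm]) (by omega) h4).elim
    · exact Or.inr (deg0 h g (by rw [hgh, mul_comm]) (by omega))

end X045
end

open X045

/-- The homogeneous quartic `−x₀²x₁² + x₀³x₂ − x₁³x₂ + x₀x₁x₂² − 5x₂⁴`
(the plane model equation of `X₀(45)`) is irreducible in `ℂ[x₀, x₁, x₂]`. -/
theorem stmt_12 :
    Irreducible (-(X 0) ^ 2 * (X 1) ^ 2 + (X 0) ^ 3 * (X 2) - (X 1) ^ 3 * (X 2)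
        + (X 0) * (X 1) * (X 2) ^ 2 - 5 * (X 2) ^ 4 :
      MvPolynomial (Fin 3) ℂ) := by
  have htrans : (finSuccEquiv ℂ 2) ((renameEquiv ℂ (Equiv.swap (1 : Fin 3) 2))
      (-(X 0) ^ 2 * (X 1) ^ 2 + (X 0) ^ 3 * (X 2) - (X 1) ^ 3 * (X 2)
        + (X 0) * (X 1) * (X 2) ^ 2 - 5 * (X 2) ^ 4)) = fpoly := by
    have e0 : (Equiv.swap (1 : Fin 3) 2) 0 = 0 := by decide
    have e1 : (Equiv.swap (1 : Fin 3) 2) (Fin.succ 0) = Fin.succ 1 := by decide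
    have e2 : (Equiv.swap (1 : Fin 3) 2) (Fin.succ 1) = Fin.succ 0 := by decide
    have s1 : (X (1 : Fin 3) : MvPolynomial (Fin 3) ℂ) = X (Fin.succ 0) := rfl
    have s2 : (X (2 : Fin 3) : MvPolynomial (Fin 3) ℂ) = X (Fin.succ 1) := rfl
    simp only [renameEquiv_apply, map_add, map_sub, map_mul, map_pow, map_neg, map_ofNat,
      rename_X, e0, e1, e2, s1, s2, finSuccEquiv_X_zero, finSuccEquiv_X_succ]
    show _ = fpoly
    rw [fpoly, z, y]
    simp only [map_add, map_mul, map_neg, map_pow, map_ofNat]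
    ring
  have h1 := (MulEquiv.irreducible_iff (finSuccEquiv ℂ 2).toMulEquiv).mp
    (htrans ▸ irreducible_fpoly)
  exact (MulEquiv.irreducible_iff
    (renameEquiv ℂ (Equiv.swap (1 : Fin 3) 2)).toMulEquiv).mp h1
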